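/- (Advantage discrepancy bound) For two kernels P, P' with max one-step TV distance δ₁, a policy π', discount γ∈[0,1), and ε = max_{s,a} |A^{P,π'}(s,a)|: | E_{τ∼P,π'}[Σ_{t=0}^∞ γ^t A^{P,π'}(s_t,a_t)] - E_{τ∼P',π'}[Σ_{t=0}^∞ γ^t A^{P,π'}(s_t,a_t)] | ≤ 2γ ε δ₁ / (1-γ)². -/

import Mathlib

open scoped BigOperators

variable {S A : Type*}

/-- `P` is a transition kernel: for each state-action pair, a probability
distribution over next states. -/
def IsKernel [Fintype S] (P : S → A → S → ℝ) : Prop :=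
  ∀ s a, (∀ s', 0 ≤ P s a s') ∧ ∑ s', P s a s' = 1

/-- `π` is a stochastic policy: for each state, a probability distribution over actions. -/
def IsPolicy [Fintype A] (π : S → A → ℝ) : Prop :=
  ∀ s, (∀ a, 0 ≤ π s a) ∧ ∑ a, π s a = 1

/-- `ρ` is a probability distribution over states. -/
def IsDist [Fintype S] (ρ : S → ℝ) : Prop :=
  (∀ s, 0 ≤ ρ s) ∧ ∑ s, ρ s = 1

/-- One step of the state-marginal evolution under kernel `P` and policy `π`. -/
noncomputable def stepMarginal [Fintype S] [Fintype A]
    (P : S → A → S → ℝ) (π : S → A → ℝ) (μ : S → ℝ) : S → ℝ :=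
  fun s' => ∑ s, μ s * ∑ a, π s a * P s a s'

/-- The time-`t` state marginal under kernel `P`, policy `π`, initial distribution `ρ`. -/
noncomputable def marginal [Fintype S] [Fintype A]
    (P : S → A → S → ℝ) (π : S → A → ℝ) (ρ : S → ℝ) : ℕ → S → ℝ
  | 0 => ρ
  | t + 1 => stepMarginal P π (marginal P π ρ t)

/-- Expected one-step reward when the current state is distributed according to `μ`. -/
noncomputable def expReward [Fintype S] [Fintype A]
    (P : S → A → S → ℝ) (π : S → A → ℝ) (r : S → A → S → ℝ) (μ : S → ℝ) : ℝ :=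
  ∑ s, μ s * ∑ a, π s a * ∑ s', P s a s' * r s a s'

/-- The expected discounted return `J(P, π)` with initial distribution `ρ`. -/
noncomputable def Jret [Fintype S] [Fintype A]
    (P : S → A → S → ℝ) (π : S → A → ℝ) (r : S → A → S → ℝ) (γ : ℝ) (ρ : S → ℝ) : ℝ :=
  ∑' t : ℕ, γ ^ t * expReward P π r (marginal P π ρ t)

/-- The value function `V^{P,π}(s)`: the return starting from state `s`. -/
noncomputable def Vval [Fintype S] [Fintype A] [DecidableEq S]
    (P : S → A → S → ℝ) (π : S → A → ℝ) (r : S → A → S → ℝ) (γ : ℝ) (s : S) : ℝ :=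
  Jret P π r γ (fun s' => if s' = s then 1 else 0)

/-- The state-action value function `Q^{P,π}(s,a)`. -/
noncomputable def Qval [Fintype S] [Fintype A] [DecidableEq S]
    (P : S → A → S → ℝ) (π : S → A → ℝ) (r : S → A → S → ℝ) (γ : ℝ) (s : S) (a : A) : ℝ :=
  ∑ s', P s a s' * (r s a s' + γ * Vval P π r γ s')

/-- The advantage function `A^{P,π}(s,a) = Q^{P,π}(s,a) - V^{P,π}(s)`. -/
noncomputable def Aval [Fintype S] [Fintype A] [DecidableEq S]
    (P : S → A → S → ℝ) (π : S → A → ℝ) (r : S → A → S → ℝ) (γ : ℝ) (s : S) (a : A) : ℝ :=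
  Qval P π r γ s a - Vval P π r γ s

lemma marginal_isDist [Fintype S] [Fintype A] {P : S → A → S → ℝ} {π : S → A → ℝ}
    {ρ : S → ℝ} (hP : IsKernel P) (hπ : IsPolicy π) (hρ : IsDist ρ) (t : ℕ) :
    IsDist (marginal P π ρ t) := by
  induction t with
  | zero => exact hρ
  | succ t ih =>
    constructor
    · intro s'
      apply Finset.sum_nonneg; intro s _
      exact mul_nonneg (ih.1 s)
        (Finset.sum_nonneg fun a _ => mul_nonneg ((hπ s).1 a) ((hP s a).1 s'))
    · show ∑ s', stepMarginal P π (marginal P π ρ t) s' = 1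
      unfold stepMarginal
      rw [Finset.sum_comm]
      have h : ∀ s, ∑ s', marginal P π ρ t s * ∑ a, π s a * P s a s'
          = marginal P π ρ t s := by
        intro s
        rw [← Finset.mul_sum, Finset.sum_comm]
        have : ∀ a ∈ Finset.univ, ∑ s', π s a * P s a s' = π s a := by
          intro a _
          rw [← Finset.mul_sum, (hP s a).2, mul_one]
        rw [Finset.sum_congr rfl this, (hπ s).2, mul_one]
      rw [Finset.sum_congr rfl (fun s _ => h s), ih.2]

lemma step_tv [Fintype S] [Fintype A] {P P' : S → A → S → ℝ} {π : S → A → ℝ}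
    {μ ν : S → ℝ} {δ₁ : ℝ}
    (hP : IsKernel P) (hπ : IsPolicy π) (hν : IsDist ν)
    (hδ : ∀ s a, ∑ s', |P s a s' - P' s a s'| ≤ 2 * δ₁) :
    ∑ s', |stepMarginal P π μ s' - stepMarginal P' π ν s'|
      ≤ (∑ s, |μ s - ν s|) + 2 * δ₁ := by
  have key : ∀ s', stepMarginal P π μ s' - stepMarginal P' π ν s'
      = ∑ s, ∑ a, π s a * ((μ s - ν s) * P s a s' + ν s * (P s a s' - P' s a s')) := by
    intro s'
    unfold stepMarginal
    rw [← Finset.sum_sub_distrib]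
    refine Finset.sum_congr rfl fun s _ => ?_
    rw [Finset.mul_sum, Finset.mul_sum, ← Finset.sum_sub_distrib]
    exact Finset.sum_congr rfl fun a _ => by ring
  calc ∑ s', |stepMarginal P π μ s' - stepMarginal P' π ν s'|
      ≤ ∑ s', ∑ s, ∑ a, π s a * (|μ s - ν s| * P s a s' + ν s * |P s a s' - P' s a s'|) := by
        refine Finset.sum_le_sum fun s' _ => ?_
        rw [key s']
        refine (Finset.abs_sum_le_sum_abs _ _).trans (Finset.sum_le_sum fun s _ => ?_)
        refine (Finset.abs_sum_le_sum_abs _ _).trans (Finset.sum_le_sum fun a _ => ?_)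
        rw [abs_mul, abs_of_nonneg ((hπ s).1 a)]
        refine mul_le_mul_of_nonneg_left ((abs_add_le _ _).trans ?_) ((hπ s).1 a)
        rw [abs_mul, abs_of_nonneg ((hP s a).1 s'), abs_mul, abs_of_nonneg (hν.1 s)]
    _ = ∑ s, ∑ a, π s a * (|μ s - ν s| * (∑ s', P s a s')
          + ν s * ∑ s', |P s a s' - P' s a s'|) := by
        rw [Finset.sum_comm]
        refine Finset.sum_congr rfl fun s _ => ?_
        rw [Finset.sum_comm]
        refine Finset.sum_congr rfl fun a _ => ?_
        rw [← Finset.mul_sum, Finset.sum_add_distrib, ← Finset.mul_sum, ← Finset.mul_sum]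
    _ ≤ ∑ s, ∑ a, π s a * (|μ s - ν s| + ν s * (2 * δ₁)) := by
        refine Finset.sum_le_sum fun s _ => Finset.sum_le_sum fun a _ => ?_
        refine mul_le_mul_of_nonneg_left ?_ ((hπ s).1 a)
        rw [(hP s a).2, mul_one]
        exact add_le_add le_rfl (mul_le_mul_of_nonneg_left (hδ s a) (hν.1 s))
    _ = ∑ s, (|μ s - ν s| + ν s * (2 * δ₁)) := by
        refine Finset.sum_congr rfl fun s _ => ?_
        rw [← Finset.sum_mul, (hπ s).2, one_mul]
    _ = (∑ s, |μ s - ν s|) + 2 * δ₁ := by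
        rw [Finset.sum_add_distrib, ← Finset.sum_mul, hν.2, one_mul]

/-- advantage discrepancy bound: the expected discounted advantage sums
under trajectories generated by `P` versus `P'` differ by at most `2γεδ₁/(1-γ)²`. -/
theorem advantage_discrepancy [Fintype S] [Fintype A] [DecidableEq S]
    (P P' : S → A → S → ℝ) (π' : S → A → ℝ) (r : S → A → S → ℝ) (γ : ℝ) (ρ : S → ℝ)
    (ε δ₁ : ℝ)
    (hP : IsKernel P) (hP' : IsKernel P') (hπ' : IsPolicy π') (hρ : IsDist ρ)
    (hγ0 : 0 ≤ γ) (hγ1 : γ < 1)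
    (hε : ∀ s a, |Aval P π' r γ s a| ≤ ε)
    (hδ : ∀ s a, (1 / 2) * ∑ s', |P' s a s' - P s a s'| ≤ δ₁) :
    |(∑' t : ℕ, γ ^ t * ∑ s, marginal P π' ρ t s * ∑ a, π' s a * Aval P π' r γ s a) -
        ∑' t : ℕ, γ ^ t * ∑ s, marginal P' π' ρ t s * ∑ a, π' s a * Aval P π' r γ s a| ≤
      2 * γ * ε * δ₁ / (1 - γ) ^ 2 := by
  -- abbreviations
  set f : S → ℝ := fun s => ∑ a, π' s a * Aval P π' r γ s a with hf_def
  set μ : ℕ → S → ℝ := marginal P π' ρ with hμ_def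
  set ν : ℕ → S → ℝ := marginal P' π' ρ with hν_def
  have hS : Nonempty S := by
    by_contra h
    rw [not_nonempty_iff] at h
    have := hρ.2
    simp [Finset.univ_eq_empty] at this
  have hA : Nonempty A := by
    by_contra h
    rw [not_nonempty_iff] at h
    have := (hπ' hS.some).2
    simp [Finset.univ_eq_empty] at this
  have hε0 : 0 ≤ ε := le_trans (abs_nonneg _) (hε hS.some hA.some)
  have hδ0 : 0 ≤ δ₁ := by
    refine le_trans ?_ (hδ hS.some hA.some)
    positivity
  have hδ2 : ∀ s a, ∑ s', |P s a s' - P' s a s'| ≤ 2 * δ₁ := by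
    intro s a
    have h1 := hδ s a
    have h2 : ∑ s', |P s a s' - P' s a s'| = ∑ s', |P' s a s' - P s a s'| :=
      Finset.sum_congr rfl fun s' _ => abs_sub_comm _ _
    rw [h2]; linarith
  have hμd : ∀ t, IsDist (μ t) := marginal_isDist hP hπ' hρ
  have hνd : ∀ t, IsDist (ν t) := marginal_isDist hP' hπ' hρ
  have hf : ∀ s, |f s| ≤ ε := by
    intro s
    calc |f s| ≤ ∑ a, |π' s a * Aval P π' r γ s a| := Finset.abs_sum_le_sum_abs _ _
      _ ≤ ∑ a, π' s a * ε := Finset.sum_le_sum fun a _ => by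
          rw [abs_mul, abs_of_nonneg ((hπ' s).1 a)]
          exact mul_le_mul_of_nonneg_left (hε s a) ((hπ' s).1 a)
      _ = ε := by rw [← Finset.sum_mul, (hπ' s).2, one_mul]
  -- total variation bound between marginals
  have htv : ∀ t : ℕ, ∑ s, |μ t s - ν t s| ≤ 2 * t * δ₁ := by
    intro t
    induction t with
    | zero => simp [hμ_def, hν_def, marginal]
    | succ t ih =>
      have hstep := step_tv (μ := μ t) (ν := ν t) hP hπ' (hνd t) hδ2
      have : ∑ s, |μ (t + 1) s - ν (t + 1) s|
          ≤ (∑ s, |μ t s - ν t s|) + 2 * δ₁ := hstep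
      push_cast
      push_cast at ih
      linarith
  -- the two series
  set a : ℕ → ℝ := fun t => γ ^ t * ∑ s, μ t s * f s with ha_def
  set b : ℕ → ℝ := fun t => γ ^ t * ∑ s, ν t s * f s with hb_def
  have hbound : ∀ (w : ℕ → S → ℝ), (∀ t, IsDist (w t)) →
      ∀ t, |γ ^ t * ∑ s, w t s * f s| ≤ ε * γ ^ t := by
    intro w hw t
    rw [abs_mul, abs_of_nonneg (pow_nonneg hγ0 t)]
    rw [mul_comm (ε : ℝ) (γ ^ t)]
    refine mul_le_mul_of_nonneg_left ?_ (pow_nonneg hγ0 t)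
    calc |∑ s, w t s * f s| ≤ ∑ s, |w t s * f s| := Finset.abs_sum_le_sum_abs _ _
      _ ≤ ∑ s, w t s * ε := Finset.sum_le_sum fun s _ => by
          rw [abs_mul, abs_of_nonneg ((hw t).1 s)]
          exact mul_le_mul_of_nonneg_left (hf s) ((hw t).1 s)
      _ = ε := by rw [← Finset.sum_mul, (hw t).2, one_mul]
  have hgeo : Summable fun t : ℕ => ε * γ ^ t :=
    (summable_geometric_of_lt_one hγ0 hγ1).mul_left ε
  have hsa : Summable a := by
    refine Summable.of_norm_bounded hgeo fun t => ?_
    rw [Real.norm_eq_abs]; exact hbound μ hμd t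
  have hsb : Summable b := by
    refine Summable.of_norm_bounded hgeo fun t => ?_
    rw [Real.norm_eq_abs]; exact hbound ν hνd t
  have hγn : ‖γ‖ < 1 := by rwa [Real.norm_eq_abs, abs_of_nonneg hγ0]
  have hgsum : Summable fun t : ℕ => 2 * δ₁ * ε * ((t : ℝ) * γ ^ t) := by
    have := summable_pow_mul_geometric_of_norm_lt_one 1 hγn (R := ℝ)
    simp only [pow_one] at this
    exact this.mul_left _
  -- termwise bound on the difference
  have hterm : ∀ t : ℕ, |a t - b t| ≤ 2 * δ₁ * ε * ((t : ℝ) * γ ^ t) := by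
    intro t
    have h1 : a t - b t = γ ^ t * ∑ s, (μ t s - ν t s) * f s := by
      simp only [ha_def, hb_def, ← mul_sub, ← Finset.sum_sub_distrib, sub_mul]
    rw [h1, abs_mul, abs_of_nonneg (pow_nonneg hγ0 t)]
    have h2 : |∑ s, (μ t s - ν t s) * f s| ≤ 2 * t * δ₁ * ε := by
      calc |∑ s, (μ t s - ν t s) * f s| ≤ ∑ s, |(μ t s - ν t s)| * |f s| := by
            refine (Finset.abs_sum_le_sum_abs _ _).trans ?_
            exact le_of_eq (Finset.sum_congr rfl fun s _ => abs_mul _ _)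
        _ ≤ ∑ s, |(μ t s - ν t s)| * ε :=
            Finset.sum_le_sum fun s _ =>
              mul_le_mul_of_nonneg_left (hf s) (abs_nonneg _)
        _ = (∑ s, |μ t s - ν t s|) * ε := by rw [Finset.sum_mul]
        _ ≤ 2 * t * δ₁ * ε := mul_le_mul_of_nonneg_right (htv t) hε0
    calc γ ^ t * |∑ s, (μ t s - ν t s) * f s|
        ≤ γ ^ t * (2 * t * δ₁ * ε) :=
          mul_le_mul_of_nonneg_left h2 (pow_nonneg hγ0 t)
      _ = 2 * δ₁ * ε * ((t : ℝ) * γ ^ t) := by ring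
  have hsab : Summable fun t => ‖a t - b t‖ := by
    refine Summable.of_nonneg_of_le (fun t => norm_nonneg _) (fun t => ?_) hgsum
    rw [Real.norm_eq_abs]; exact hterm t
  have key : |∑' t, a t - ∑' t, b t| ≤ 2 * δ₁ * ε * (γ / (1 - γ) ^ 2) := by
    rw [← Summable.tsum_sub hsa hsb]
    calc |∑' t, (a t - b t)| ≤ ∑' t, ‖a t - b t‖ := by
          simpa using norm_tsum_le_tsum_norm hsab
      _ ≤ ∑' t : ℕ, 2 * δ₁ * ε * ((t : ℝ) * γ ^ t) := by
          refine Summable.tsum_le_tsum (fun t => ?_) hsab hgsum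
          rw [Real.norm_eq_abs]; exact hterm t
      _ = 2 * δ₁ * ε * ∑' t : ℕ, (t : ℝ) * γ ^ t := tsum_mul_left
      _ = 2 * δ₁ * ε * (γ / (1 - γ) ^ 2) := by
          rw [tsum_coe_mul_geometric_of_norm_lt_one hγn]
  calc |(∑' t : ℕ, γ ^ t * ∑ s, marginal P π' ρ t s * ∑ a, π' s a * Aval P π' r γ s a) -
        ∑' t : ℕ, γ ^ t * ∑ s, marginal P' π' ρ t s * ∑ a, π' s a * Aval P π' r γ s a|
      = |∑' t, a t - ∑' t, b t| := rfl
    _ ≤ 2 * δ₁ * ε * (γ / (1 - γ) ^ 2) := key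
    _ = 2 * γ * ε * δ₁ / (1 - γ) ^ 2 := by ring
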